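/- If ξ̄ ∈ Ω satisfies E(ξ̄) ≤ c, then ξₘ ≥ aₘ F⁻¹(e^{-c/(kₘ(u_{m+1}-uₘ))}) and, when u₁ > u₀, ξ₁ ≤ a₀ F⁻¹(1 - e^{-c/(k₀(u₁-u₀))}), while when u₁ = u₀, ξ₁ ≤ (4c/d₁)^{1/2}. -/

import Mathlib

noncomputable def F (ξ : ℝ) : ℝ :=
  (1 / Real.sqrt Real.pi) * ∫ s in (0:ℝ)..ξ, Real.exp (-s ^ 2 / 4)

open MeasureTheory Set

lemma gauss_cont : Continuous fun s : ℝ => Real.exp (-s ^ 2 / 4) := by continuity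

lemma gauss_ii (x y : ℝ) : IntervalIntegrable (fun s : ℝ => Real.exp (-s ^ 2 / 4)) volume x y :=
  gauss_cont.intervalIntegrable x y

lemma gauss_eq : (fun s : ℝ => Real.exp (-s ^ 2 / 4)) = fun s : ℝ => Real.exp (-(1/4) * s ^ 2) := by
  funext s; ring_nf

lemma gauss_int : Integrable (fun s : ℝ => Real.exp (-s ^ 2 / 4)) := by
  rw [gauss_eq]; exact integrable_exp_neg_mul_sq (by norm_num)

lemma gauss_Ioi : ∫ s in Ioi (0:ℝ), Real.exp (-s ^ 2 / 4) = Real.sqrt Real.pi := by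
  rw [gauss_eq, integral_gaussian_Ioi]
  rw [show Real.pi / (1/4) = 4 * Real.pi by ring, show (4:ℝ) * Real.pi = 2^2 * Real.pi by norm_num,
    Real.sqrt_mul (by positivity), Real.sqrt_sq (by norm_num)]
  ring

lemma sqrtpi_pos : 0 < Real.sqrt Real.pi := Real.sqrt_pos.2 Real.pi_pos

lemma F_zero : F 0 = 0 := by simp [F]

lemma F_strictMono : StrictMono F := by
  intro x y hxy
  have h : F y = F x + (1 / Real.sqrt Real.pi) * ∫ s in x..y, Real.exp (-s ^ 2 / 4) := by
    rw [F, F, ← mul_add, intervalIntegral.integral_add_adjacent_intervals (gauss_ii 0 x) (gauss_ii x y)]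
  have hpos : 0 < ∫ s in x..y, Real.exp (-s ^ 2 / 4) :=
    intervalIntegral.intervalIntegral_pos_of_pos (gauss_ii x y) (fun s => Real.exp_pos _) hxy
  nlinarith [sqrtpi_pos, one_div_pos.2 sqrtpi_pos]

lemma F_lt_one (x : ℝ) : F x < 1 := by
  rcases le_or_gt x 0 with hx | hx
  · calc F x ≤ F 0 := by rcases eq_or_lt_of_le hx with h | h; · simp [h]
                         · exact (F_strictMono h).le
    _ < 1 := by rw [F_zero]; norm_num
  · have hsplit : (∫ s in Ioc 0 x, Real.exp (-s ^ 2 / 4)) + ∫ s in Ioi x, Real.exp (-s ^ 2 / 4)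
      = Real.sqrt Real.pi := by
      rw [← gauss_Ioi, ← MeasureTheory.setIntegral_union (Set.Ioc_disjoint_Ioi le_rfl)
        measurableSet_Ioi gauss_int.integrableOn gauss_int.integrableOn,
        Set.Ioc_union_Ioi_eq_Ioi hx.le]
  -- tail positive
    have htail : 0 < ∫ s in Ioi x, Real.exp (-s ^ 2 / 4) := by
      have h1 : (0:ℝ) < ∫ s in Ioc x (x+1), Real.exp (-s ^ 2 / 4) := by
        rw [← intervalIntegral.integral_of_le (by linarith)]
        exact intervalIntegral.intervalIntegral_pos_of_pos (gauss_ii _ _) (fun s => Real.exp_pos _) (by linarith)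
      refine lt_of_lt_of_le h1 (MeasureTheory.setIntegral_mono_set gauss_int.integrableOn ?_ ?_)
      · exact Filter.Eventually.of_forall fun s => (Real.exp_pos _).le
      · exact HasSubset.Subset.eventuallyLE Set.Ioc_subset_Ioi_self
    have : F x = (1 / Real.sqrt Real.pi) * ∫ s in Ioc 0 x, Real.exp (-s ^ 2 / 4) := by
      rw [F, intervalIntegral.integral_of_le hx.le]
    rw [this]
    have hkey : (∫ s in Ioc 0 x, Real.exp (-s ^ 2 / 4)) < Real.sqrt Real.pi := by linarith
    calc (1 / Real.sqrt Real.pi) * ∫ s in Ioc 0 x, Real.exp (-s ^ 2 / 4)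
        < (1 / Real.sqrt Real.pi) * Real.sqrt Real.pi :=
          mul_lt_mul_of_pos_left hkey (one_div_pos.2 sqrtpi_pos)
      _ = 1 := by field_simp

lemma F_tendsto : Filter.Tendsto F Filter.atTop (nhds 1) := by
  have h := MeasureTheory.intervalIntegral_tendsto_integral_Ioi 0 gauss_int.integrableOn
    Filter.tendsto_id (f := fun s : ℝ => Real.exp (-s ^ 2 / 4)) (μ := volume)
  rw [gauss_Ioi] at h
  have h2 := h.const_mul (1 / Real.sqrt Real.pi)
  have h3 : (1 / Real.sqrt Real.pi) * Real.sqrt Real.pi = 1 := by field_simp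
  rw [h3] at h2
  exact h2

lemma F_cont : Continuous F :=
  continuous_const.mul (intervalIntegral.continuous_primitive (fun a b => gauss_ii a b) 0)

lemma F_surj_on (y : ℝ) (h0 : 0 ≤ y) (h1 : y < 1) : ∃ x, 0 ≤ x ∧ F x = y := by
  obtain ⟨z, hz⟩ := (F_tendsto.eventually (eventually_gt_nhds h1)).exists
  have hyz : y ≤ F z := hz.le
  have h0z : (0:ℝ) ≤ z := by
    by_contra h
    push_neg at h
    have := F_strictMono h
    rw [F_zero] at this
    linarith
  have := intermediate_value_Icc h0z F_cont.continuousOn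
  have hy : y ∈ Icc (F 0) (F z) := by rw [F_zero]; exact ⟨h0, hyz⟩
  obtain ⟨x, hx, hFx⟩ := this hy
  exact ⟨x, hx.1, hFx⟩

lemma F_inv (x : ℝ) : Function.invFun F (F x) = x :=
  Function.leftInverse_invFun F_strictMono.injective x

/-- Extension of `ξ = (ξ₁, …, ξₘ)` to indices `0, …, m+1`, with the convention
`ξ_{m+1} = 0` (the value at index `0` is irrelevant: there `F(ξ₀/a₀) = F(+∞) = 1`). -/
def ext (m : ℕ) (ξ : Fin m → ℝ) : ℕ → ℝ :=
  fun i => if h : 1 ≤ i ∧ i ≤ m then ξ ⟨i - 1, by omega⟩ else 0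

/-- The Stefan–Dirichlet potential
`E(ξ̄) = -∑_{i=0}^m kᵢ(u_{i+1}-uᵢ) ln(F(ξᵢ/aᵢ) - F(ξ_{i+1}/aᵢ)) + ∑_{i=1}^m dᵢξᵢ²/4`,
with conventions `F(ξ₀/a₀) = 1`, `ξ_{m+1} = 0` (so `F(ξ_{m+1}/aₘ) = 0`). -/
noncomputable def E (m : ℕ) (u k a d : ℕ → ℝ) (ξ : Fin m → ℝ) : ℝ :=
  (∑ i ∈ Finset.range (m + 1),
    -(k i * (u (i + 1) - u i) *
      Real.log ((if i = 0 then 1 else F (ext m ξ i / a i)) - F (ext m ξ (i + 1) / a i))))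
  + ∑ i ∈ Finset.Icc 1 m, d i * (ext m ξ i) ^ 2 / 4

/-- The domain `Ω = {ξ₁ > ξ₂ > ⋯ > ξₘ > 0}`. -/
def Omega (m : ℕ) : Set (Fin m → ℝ) := {ξ | StrictAnti ξ ∧ ∀ i, 0 < ξ i}

theorem E_sublevel_bounds (m : ℕ) (hm : 1 ≤ m) (u k a d : ℕ → ℝ)
    (hk : ∀ i ≤ m, 0 < k i) (ha : ∀ i ≤ m, 0 < a i)
    (hd : ∀ i, 1 ≤ i → i ≤ m → 0 ≤ d i)
    (hu0 : u 0 ≤ u 1) (hu : ∀ i, 1 ≤ i → i ≤ m → u i < u (i + 1))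
    (hd1 : u 0 = u 1 → 0 < d 1) (c : ℝ)
    (ξ : Fin m → ℝ) (hξ : ξ ∈ Omega m) (hE : E m u k a d ξ ≤ c) :
    a m * Function.invFun F (Real.exp (-c / (k m * (u (m + 1) - u m)))) ≤ ext m ξ m ∧
    (u 0 < u 1 →
      ext m ξ 1 ≤ a 0 * Function.invFun F (1 - Real.exp (-c / (k 0 * (u 1 - u 0))))) ∧
    (u 0 = u 1 → ext m ξ 1 ≤ Real.sqrt (4 * c / d 1)) := by
  obtain ⟨hanti, hpos⟩ := hξ
  have hext : ∀ i (h1 : 1 ≤ i) (h2 : i ≤ m), ext m ξ i = ξ ⟨i - 1, by omega⟩ := by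
    intro i h1 h2; unfold _root_.ext; rw [dif_pos ⟨h1, h2⟩]
  have hext0 : ext m ξ (m + 1) = 0 := by
    unfold _root_.ext; rw [dif_neg (by omega)]
  have hextpos : ∀ i, 1 ≤ i → i ≤ m → 0 < ext m ξ i := by
    intro i h1 h2; rw [hext i h1 h2]; exact hpos _
  have hextlt : ∀ i, 1 ≤ i → i < m → ext m ξ (i + 1) < ext m ξ i := by
    intro i h1 h2
    rw [hext i h1 (by omega), hext (i + 1) (by omega) (by omega)]
    exact hanti (show (⟨i - 1, by omega⟩ : Fin m) < ⟨i + 1 - 1, by omega⟩ by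
      simp only [Fin.lt_def]; omega)
  set T : ℕ → ℝ := fun i =>
    -(k i * (u (i + 1) - u i) *
      Real.log ((if i = 0 then 1 else F (ext m ξ i / a i)) - F (ext m ξ (i + 1) / a i)))
    with hTdef
  set D : ℕ → ℝ := fun i => d i * (ext m ξ i) ^ 2 / 4 with hDdef
  have hEeq : E m u k a d ξ = (∑ i ∈ Finset.range (m + 1), T i) + ∑ i ∈ Finset.Icc 1 m, D i :=
    rfl
  -- bounds on the argument of the logarithm
  have hG : ∀ i ≤ m, 0 < ((if i = 0 then 1 else F (ext m ξ i / a i)) - F (ext m ξ (i + 1) / a i))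
      ∧ ((if i = 0 then 1 else F (ext m ξ i / a i)) - F (ext m ξ (i + 1) / a i)) ≤ 1 := by
    intro i him
    by_cases h0 : i = 0
    · subst h0
      simp only [eq_self_iff_true, if_true, zero_add]
      have h1 : 0 < ext m ξ 1 / a 0 := div_pos (hextpos 1 le_rfl hm) (ha 0 (by omega))
      have hF1 : 0 < F (ext m ξ 1 / a 0) := by rw [← F_zero]; exact F_strictMono h1
      exact ⟨by linarith [F_lt_one (ext m ξ 1 / a 0)], by linarith⟩
    · have h1 : 1 ≤ i := by omega
      rw [if_neg h0]
      have hQ0 : 0 ≤ F (ext m ξ (i + 1) / a i) := by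
        rcases eq_or_lt_of_le him with hmi | hmi
        · subst hmi; rw [hext0]; simp [F_zero]
        · have := div_pos (hextpos (i + 1) (by omega) (by omega)) (ha i him)
          rw [← F_zero]; exact (F_strictMono this).le
      have hQlt : F (ext m ξ (i + 1) / a i) < F (ext m ξ i / a i) := by
        apply F_strictMono
        have hlt : ext m ξ (i + 1) < ext m ξ i := by
          rcases eq_or_lt_of_le him with hmi | hmi
          · subst hmi; rw [hext0]; exact hextpos i h1 le_rfl
          · exact hextlt i h1 hmi
        exact (div_lt_div_iff_of_pos_right (ha i him)).2 hlt
      exact ⟨by linarith, by linarith [F_lt_one (ext m ξ i / a i)]⟩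
  -- nonnegativity of all summands
  have hTnn : ∀ i ∈ Finset.range (m + 1), 0 ≤ T i := by
    intro i hi
    rw [Finset.mem_range] at hi
    have him : i ≤ m := by omega
    obtain ⟨hG0, hG1⟩ := hG i him
    have hlog := Real.log_nonpos hG0.le hG1
    have hK : 0 ≤ k i * (u (i + 1) - u i) := by
      rcases Nat.eq_zero_or_pos i with h0 | h0
      · subst h0; exact mul_nonneg (hk 0 (by omega)).le (by linarith)
      · exact mul_nonneg (hk i him).le (by linarith [hu i h0 him])
    simp only [hTdef]
    nlinarith
  have hDnn : ∀ i ∈ Finset.Icc 1 m, 0 ≤ D i := by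
    intro i hi
    rw [Finset.mem_Icc] at hi
    exact div_nonneg (mul_nonneg (hd i hi.1 hi.2) (sq_nonneg _)) (by norm_num)
  have hTle : ∀ j ≤ m, T j ≤ c := by
    intro j hj
    have h1 : T j ≤ ∑ i ∈ Finset.range (m + 1), T i :=
      Finset.single_le_sum hTnn (Finset.mem_range.2 (by omega))
    have h2 : 0 ≤ ∑ i ∈ Finset.Icc 1 m, D i := Finset.sum_nonneg hDnn
    rw [hEeq] at hE
    linarith
  have hm0 : m ≠ 0 := by omega
  have hKm : 0 < k m * (u (m + 1) - u m) := mul_pos (hk m le_rfl) (by linarith [hu m hm le_rfl])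
  have hGm : (if m = 0 then 1 else F (_root_.ext m ξ m / a m)) - F (_root_.ext m ξ (m + 1) / a m)
      = F (_root_.ext m ξ m / a m) := by
    rw [if_neg hm0, hext0]
    norm_num [F_zero]
  have hPpos : 0 < F (_root_.ext m ξ m / a m) := by
    rw [← F_zero]; exact F_strictMono (div_pos (hextpos m hm le_rfl) (ha m le_rfl))
  have hPlt : F (_root_.ext m ξ m / a m) < 1 := F_lt_one _
  have hTm := hTle m le_rfl
  simp only [hTdef] at hTm
  rw [hGm] at hTm
  -- Part 1
  have hlogP : -c / (k m * (u (m + 1) - u m)) ≤ Real.log (F (_root_.ext m ξ m / a m)) := by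
    rw [div_le_iff₀ hKm]
    nlinarith
  have hexp : Real.exp (-c / (k m * (u (m + 1) - u m))) ≤ F (_root_.ext m ξ m / a m) :=
    (Real.exp_le_exp.2 hlogP).trans_eq (Real.exp_log hPpos)
  have part1 : a m * Function.invFun F (Real.exp (-c / (k m * (u (m + 1) - u m))))
      ≤ _root_.ext m ξ m := by
    obtain ⟨x, hx0, hFx⟩ := F_surj_on (Real.exp (-c / (k m * (u (m + 1) - u m))))
      (Real.exp_pos _).le (lt_of_le_of_lt hexp hPlt)
    have hxle : x ≤ _root_.ext m ξ m / a m := by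
      refine F_strictMono.le_iff_le.1 ?_
      rw [hFx]; exact hexp
    rw [← hFx, F_inv]
    calc a m * x ≤ a m * (_root_.ext m ξ m / a m) :=
          mul_le_mul_of_nonneg_left hxle (ha m le_rfl).le
      _ = _root_.ext m ξ m := by
          rw [mul_comm, div_mul_cancel₀ _ (ha m le_rfl).ne']
  -- positivity of c
  have hc : 0 < c := by
    have hlogneg := Real.log_neg hPpos hPlt
    nlinarith
  refine ⟨part1, ?_, ?_⟩
  · -- Part 2
    intro hu01
    have hK0 : 0 < k 0 * (u 1 - u 0) := mul_pos (hk 0 (by omega)) (by linarith)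
    have hqpos : 0 < _root_.ext m ξ 1 / a 0 := div_pos (hextpos 1 le_rfl hm) (ha 0 (by omega))
    have hFq0 : 0 < F (_root_.ext m ξ 1 / a 0) := by rw [← F_zero]; exact F_strictMono hqpos
    have hT0 := hTle 0 (by omega)
    simp only [hTdef, eq_self_iff_true, if_true, zero_add] at hT0
    have hlog : -c / (k 0 * (u 1 - u 0)) ≤ Real.log (1 - F (_root_.ext m ξ 1 / a 0)) := by
      rw [div_le_iff₀ hK0]
      nlinarith
    have hFqle : F (_root_.ext m ξ 1 / a 0) ≤ 1 - Real.exp (-c / (k 0 * (u 1 - u 0))) := by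
      have h1 : Real.exp (-c / (k 0 * (u 1 - u 0))) ≤ 1 - F (_root_.ext m ξ 1 / a 0) :=
        (Real.exp_le_exp.2 hlog).trans_eq (Real.exp_log (by linarith [F_lt_one (_root_.ext m ξ 1 / a 0)]))
      linarith
    have hylt1 : 1 - Real.exp (-c / (k 0 * (u 1 - u 0))) < 1 := by
      have := Real.exp_pos (-c / (k 0 * (u 1 - u 0))); linarith
    obtain ⟨x, hx0, hFx⟩ := F_surj_on _ (le_trans hFq0.le hFqle) hylt1
    have hqx : _root_.ext m ξ 1 / a 0 ≤ x := by
      refine F_strictMono.le_iff_le.1 ?_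
      rw [hFx]; exact hFqle
    rw [← hFx, F_inv]
    calc _root_.ext m ξ 1 = (_root_.ext m ξ 1 / a 0) * a 0 :=
          (div_mul_cancel₀ _ (ha 0 (by omega)).ne').symm
      _ ≤ x * a 0 := mul_le_mul_of_nonneg_right hqx (ha 0 (by omega)).le
      _ = a 0 * x := mul_comm _ _
  · -- Part 3
    intro heq
    have hd1' := hd1 heq
    have hD1 : D 1 ≤ c := by
      have h1 : D 1 ≤ ∑ i ∈ Finset.Icc 1 m, D i :=
        Finset.single_le_sum hDnn (Finset.mem_Icc.2 ⟨le_rfl, hm⟩)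
      have h2 : 0 ≤ ∑ i ∈ Finset.range (m + 1), T i := Finset.sum_nonneg hTnn
      rw [hEeq] at hE
      linarith
    simp only [hDdef] at hD1
    have hsq : (_root_.ext m ξ 1) ^ 2 ≤ 4 * c / d 1 := by
      rw [le_div_iff₀ hd1']
      linarith
    calc _root_.ext m ξ 1 = Real.sqrt ((_root_.ext m ξ 1) ^ 2) :=
          (Real.sqrt_sq (hextpos 1 le_rfl hm).le).symm
      _ ≤ Real.sqrt (4 * c / d 1) := Real.sqrt_le_sqrt hsq
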